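/- Let A ∈ ℝ₊^{n×n} with every row having positive sum, r ∈ ℝ₊^n, and x, y ∈ ℝ^n. Define x̂ by x̂_ℓ = ln(r_ℓ / ∑_j A_{ℓj} e^{y_j}) for each ℓ. Then f(x, y) - f(x̂, y) = D(r ‖ r(A(x,y))), where f, A(x,y), r(·), and D are as in the Sinkhorn potential setup: f(x,y) = ∑_{i,j} A_{ij} e^{x_i+y_j} - ⟨r,x⟩ - ⟨c,y⟩ for any fixed c with ‖r‖₁ arbitrary, A(x,y)_{ij} = A_{ij} e^{x_i+y_j}, r(B)_i = ∑_j B_{ij}, and D(a‖b) = ∑_ℓ (b_ℓ - a_ℓ + a_ℓ ln(a_ℓ/b_ℓ)). -/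

import Mathlib

/-- The matrix-scaling potential `f(x,y) = ∑ A_{ij} e^{x_i+y_j} - ⟨r,x⟩ - ⟨c,y⟩`. -/
noncomputable def scalingPotential {n : ℕ} (A : Fin n → Fin n → ℝ) (r c x y : Fin n → ℝ) : ℝ :=
  (∑ i, ∑ j, A i j * Real.exp (x i + y j)) - (∑ i, r i * x i) - ∑ j, c j * y j

/-- Exact Sinkhorn row update: `f(x,y) - f(x̂,y) = D(r ‖ r(A(x,y)))` where
`x̂_ℓ = ln(r_ℓ / ∑_j A_{ℓj} e^{y_j})`. -/
theorem sinkhorn_exact_row_update {n : ℕ} (A : Fin n → Fin n → ℝ)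
    (hA : ∀ i j, 0 ≤ A i j) (r c : Fin n → ℝ) (hr : ∀ i, 0 < r i)
    (x y : Fin n → ℝ) (hrow : ∀ ℓ, 0 < ∑ j, A ℓ j * Real.exp (y j)) :
    scalingPotential A r c x y -
        scalingPotential A r c (fun ℓ => Real.log (r ℓ / ∑ j, A ℓ j * Real.exp (y j))) y =
      ∑ ℓ, ((∑ j, A ℓ j * Real.exp (x ℓ + y j)) - r ℓ
        + r ℓ * Real.log (r ℓ / ∑ j, A ℓ j * Real.exp (x ℓ + y j))) := by
  let s : Fin n → ℝ := fun ℓ => ∑ j, A ℓ j * Real.exp (y j)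
  have hs : s = fun ℓ => ∑ j, A ℓ j * Real.exp (y j) := rfl
  have key : ∀ (ℓ : Fin n) (t : ℝ), ∑ j, A ℓ j * Real.exp (t + y j) = Real.exp t * s ℓ := by
    intro ℓ t
    rw [hs, Finset.mul_sum]
    apply Finset.sum_congr rfl
    intro j _
    rw [Real.exp_add]; ring
  have hxhat : ∀ ℓ, Real.exp (Real.log (r ℓ / s ℓ)) = r ℓ / s ℓ := fun ℓ =>
    Real.exp_log (div_pos (hr ℓ) (hrow ℓ))
  unfold scalingPotential
  simp only [key]
  have hsum1 : ∀ ℓ, Real.exp (Real.log (r ℓ / s ℓ)) * s ℓ = r ℓ := by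
    intro ℓ
    rw [hxhat ℓ, div_mul_cancel₀ _ (hrow ℓ).ne']
  simp only [show ∀ ℓ, Real.exp (Real.log (r ℓ / ∑ j, A ℓ j * Real.exp (y j))) * s ℓ = r ℓ from hsum1]
  have hlog : ∀ ℓ, Real.log (r ℓ / (Real.exp (x ℓ) * s ℓ)) =
      Real.log (r ℓ / s ℓ) - x ℓ := by
    intro ℓ
    rw [Real.log_div (hr ℓ).ne' (mul_ne_zero (Real.exp_pos _).ne' (hrow ℓ).ne'),
      Real.log_mul (Real.exp_pos _).ne' (hrow ℓ).ne', Real.log_exp,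
      Real.log_div (hr ℓ).ne' (hrow ℓ).ne']
    ring
  simp only [hlog]
  simp only [hs, mul_sub, Finset.sum_add_distrib, Finset.sum_sub_distrib]
  ring
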